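/- arXiv:2512.23528 — 4 statements merged into one kernel-verified Lean document; each statement's English description precedes it below -/
import Mathlib

section
/- Let α, β ∈ ℝ and define s = 2α(√(4α²+β²+1) − β)/(4α²+1) and t = (√(4α²+β²+1) + 8α²β + β)/(4α²+1). If s² ≠ 1 and t ≠ 0, then α = st/(2(1−s²)) and β = (s²+t²−1)/(2t). -/
theorem invert_change_of_variables (α β s t : ℝ)
    (hs : s = 2 * α * (Real.sqrt (4 * α ^ 2 + β ^ 2 + 1) - β) / (4 * α ^ 2 + 1))
    (ht : t = (Real.sqrt (4 * α ^ 2 + β ^ 2 + 1) + 8 * α ^ 2 * β + β) / (4 * α ^ 2 + 1))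
    (hs1 : s ^ 2 ≠ 1) (ht0 : t ≠ 0) :
    α = s * t / (2 * (1 - s ^ 2)) ∧ β = (s ^ 2 + t ^ 2 - 1) / (2 * t) := by
  set r := Real.sqrt (4 * α ^ 2 + β ^ 2 + 1) with hr
  have hr2 : r ^ 2 = 4 * α ^ 2 + β ^ 2 + 1 := Real.sq_sqrt (by positivity)
  have hD : (4 * α ^ 2 + 1 : ℝ) ≠ 0 := by positivity
  have h1 : (1 : ℝ) - s ^ 2 ≠ 0 := fun h => hs1 (by linarith [sub_eq_zero.mp h])
  have key1 : s * t = 2 * α * (1 - s ^ 2) := by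
    subst hs ht
    field_simp
    linear_combination (2 * α * (4 * α ^ 2 + 1) ^ 3 - (α + 20 * α ^ 3 + 96 * α ^ 5 + 128 * α ^ 7)) * hr2
  have key2 : s ^ 2 + t ^ 2 - 1 = 2 * β * t := by
    subst hs ht
    field_simp
    linear_combination ((4 * α ^ 2 + 1) ^ 2 - (4 * α ^ 2 + 16 * α ^ 4)) * hr2
  constructor
  · rw [eq_div_iff (by simpa using mul_ne_zero two_ne_zero h1)]
    linarith [key1]
  · rw [eq_div_iff (by simpa using ht0)]
    linarith [key2]
end

section
/- Let μ be a Borel probability measure on ℝ not concentrated at a point, p > 0, G(λ) = ∫ 1/(λ−u) dμ(u), and let U ⊆ ℂ be an open set disjoint from supp(μ) on which ∫ 1/|λ−u|² dμ(u) ≤ |i+G(λ)|²/p for all λ ∈ U. Then h(λ) = λ − p/(i+G(λ)) is injective on U, and moreover |h(λ₁)−h(λ₂)| < 2|λ₁−λ₂| for distinct λ₁,λ₂ ∈ U. -/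
open MeasureTheory Complex

lemma eq_dirac_of_compl (μ : Measure ℝ) [IsProbabilityMeasure μ] (a : ℝ)
    (hc : μ {a}ᶜ = 0) : μ = Measure.dirac a := by
  have h : μ {a} = 1 := (prob_compl_eq_zero_iff (measurableSet_singleton a)).1 hc
  ext s hs
  rw [Measure.dirac_apply' a hs]
  by_cases has : a ∈ s
  · have h3 : μ {a} ≤ μ s := measure_mono (Set.singleton_subset_iff.2 has)
    simp only [Set.indicator_of_mem has, Pi.one_apply]
    exact le_antisymm prob_le_one (h ▸ h3)
  · have hle : μ s ≤ μ {a}ᶜ := measure_mono fun x hx => by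
      simp only [Set.mem_compl_iff, Set.mem_singleton_iff]
      rintro rfl; exact has hx
    simp only [Set.indicator_of_notMem has]
    exact le_antisymm (hc ▸ hle) zero_le

lemma lp_norm_sq (μ : Measure ℝ) [IsProbabilityMeasure μ] (f : ℝ → ℂ) (hf : MemLp f 2 μ) :
    ‖hf.toLp f‖ ^ 2 = ∫ u : ℝ, ‖f u‖ ^ 2 ∂μ := by
  set F := hf.toLp f
  have h1 : ‖F‖ ^ 2 = RCLike.re (inner ℂ F F : ℂ) := (inner_self_eq_norm_sq F).symm
  rw [h1, L2.inner_def, ← integral_re (L2.integrable_inner F F)]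
  apply integral_congr_ae
  filter_upwards [hf.coeFn_toLp] with u hu
  rw [hu, RCLike.inner_apply]
  simp only [RCLike.mul_re, RCLike.conj_re, RCLike.conj_im, neg_mul, sub_neg_eq_add,
    Complex.sq_norm, Complex.normSq_apply, RCLike.re_to_complex,
    RCLike.im_to_complex]
  ring

lemma lp_inner_eq (μ : Measure ℝ) [IsProbabilityMeasure μ] (f g : ℝ → ℂ)
    (hf : MemLp f 2 μ) (hg : MemLp g 2 μ) :
    (inner ℂ (hf.toLp f) (hg.toLp g) : ℂ) = ∫ u : ℝ, (starRingEnd ℂ) (f u) * g u ∂μ := by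
  rw [L2.inner_def]
  apply integral_congr_ae
  filter_upwards [hf.coeFn_toLp, hg.coeFn_toLp] with u h1 h2
  rw [h1, h2, RCLike.inner_apply, mul_comm]

lemma toLp_ne_zero (μ : Measure ℝ) [IsProbabilityMeasure μ] (f : ℝ → ℂ) (hf : MemLp f 2 μ)
    (hne : ∀ᵐ u : ℝ ∂μ, f u ≠ 0) : hf.toLp f ≠ 0 := by
  intro h0
  have h1 : f =ᵐ[μ] 0 :=
    (hf.coeFn_toLp.symm.trans (h0 ▸ Lp.coeFn_zero ℂ 2 μ : ⇑(hf.toLp f) =ᵐ[μ] 0))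
  have h2 : ∀ᵐ u : ℝ ∂μ, False := by
    filter_upwards [h1, hne] with u e1 e2; exact e2 e1
  obtain ⟨u, hu⟩ := h2.exists
  exact hu

lemma meas_inv' (l : ℂ) : Measurable (fun u : ℝ => 1 / (l - (u : ℂ))) := by fun_prop

lemma meas_invsq' (l : ℂ) : Measurable (fun u : ℝ => 1 / ‖l - (u : ℂ)‖ ^ 2) := by fun_prop

lemma meas_prod' (l₁ l₂ : ℂ) :
    Measurable (fun u : ℝ => 1 / ((l₁ - (u : ℂ)) * (l₂ - (u : ℂ)))) := by fun_prop

lemma meas_conj' (l : ℂ) :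
    Measurable (fun u : ℝ => (starRingEnd ℂ) (1 / (l - (u : ℂ)))) :=
  Complex.continuous_conj.measurable.comp (meas_inv' l)

lemma hdiff_algebra (p : ℝ) (l₁ l₂ aa bb K : ℂ) (ha : aa ≠ 0) (hb : bb ≠ 0)
    (hba : aa - bb = (l₂ - l₁) * K) :
    (l₁ - (p:ℂ)/aa) - (l₂ - (p:ℂ)/bb) = (l₁ - l₂) * (1 - (p:ℂ) * K / (aa * bb)) := by
  field_simp
  linear_combination (p:ℂ) * hba

set_option maxHeartbeats 1000000 in
theorem h_injective_lipschitz_outside (μ : Measure ℝ) [IsProbabilityMeasure μ]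
    (hnd : ¬∃ c : ℝ, μ = Measure.dirac c)
    (p : ℝ) (hp : 0 < p)
    (G : ℂ → ℂ) (hG : ∀ l : ℂ, G l = ∫ u, 1 / (l - (u : ℂ)) ∂μ)
    (U : Set ℂ) (hU : IsOpen U)
    -- U is disjoint from the support of μ:
    (hsupp : ∀ l ∈ U, ∃ ε > 0, μ {u : ℝ | ‖l - (u : ℂ)‖ < ε} = 0)
    (hbound : ∀ l ∈ U, (∫ u, 1 / ‖l - (u : ℂ)‖ ^ 2 ∂μ) ≤ ‖Complex.I + G l‖ ^ 2 / p)
    (h : ℂ → ℂ) (hh : ∀ l ∈ U, h l = l - p / (Complex.I + G l)) :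
    Set.InjOn h U ∧
      ∀ l₁ ∈ U, ∀ l₂ ∈ U, l₁ ≠ l₂ → ‖h l₁ - h l₂‖ < 2 * ‖l₁ - l₂‖ := by
  haveI : (ae μ).NeBot := ae_neBot.2 (IsProbabilityMeasure.ne_zero μ)
  have hfacts : ∀ l ∈ U, ∃ ε > 0, (∀ᵐ u : ℝ ∂μ, ε ≤ ‖l - (u:ℂ)‖) := by
    intro l hl
    obtain ⟨ε, hε, h0⟩ := hsupp l hl
    exact ⟨ε, hε, by rw [ae_iff]; simpa only [not_le] using h0⟩
  have int_inv : ∀ (l : ℂ) (ε : ℝ), 0 < ε → (∀ᵐ u : ℝ ∂μ, ε ≤ ‖l - (u:ℂ)‖) →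
      Integrable (fun u : ℝ => 1 / (l - (u : ℂ))) μ := by
    intro l ε hε hae
    refine Integrable.mono' (integrable_const (1/ε)) (meas_inv' l).aestronglyMeasurable ?_
    filter_upwards [hae] with u hu
    rw [norm_div, norm_one]
    exact one_div_le_one_div_of_le hε hu
  have int_sq : ∀ (l : ℂ) (ε : ℝ), 0 < ε → (∀ᵐ u : ℝ ∂μ, ε ≤ ‖l - (u:ℂ)‖) →
      Integrable (fun u : ℝ => 1 / ‖l - (u : ℂ)‖ ^ 2) μ := by
    intro l ε hε hae
    refine Integrable.mono' (integrable_const (1/ε^2)) (meas_invsq' l).aestronglyMeasurable ?_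
    filter_upwards [hae] with u hu
    have h1 : (0:ℝ) < ‖l - (u:ℂ)‖ := lt_of_lt_of_le hε hu
    rw [Real.norm_of_nonneg (by positivity)]
    apply one_div_le_one_div_of_le (by positivity)
    exact pow_le_pow_left₀ (le_of_lt hε) hu 2
  have mem2 : ∀ (l : ℂ) (ε : ℝ), 0 < ε → (∀ᵐ u : ℝ ∂μ, ε ≤ ‖l - (u:ℂ)‖) →
      MemLp (fun u : ℝ => 1 / (l - (u : ℂ))) 2 μ := by
    intro l ε hε hae
    refine MemLp.of_bound (meas_inv' l).aestronglyMeasurable (1/ε) ?_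
    filter_upwards [hae] with u hu
    rw [norm_div, norm_one]
    exact one_div_le_one_div_of_le hε hu
  have sq_pos : ∀ (l : ℂ) (ε : ℝ), 0 < ε → (∀ᵐ u : ℝ ∂μ, ε ≤ ‖l - (u:ℂ)‖) →
      0 < ∫ u : ℝ, 1 / ‖l - (u : ℂ)‖ ^ 2 ∂μ := by
    intro l ε hε hae
    rw [integral_pos_iff_support_of_nonneg_ae (by filter_upwards with u; positivity)
      (int_sq l ε hε hae)]
    have hsup : ∀ᵐ u : ℝ ∂μ, u ∈ Function.support (fun u : ℝ => 1 / ‖l - (u : ℂ)‖ ^ 2) := by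
      filter_upwards [hae] with u hu
      simp only [Function.mem_support]
      have h1 : (0:ℝ) < ‖l - (u:ℂ)‖ := lt_of_lt_of_le hε hu
      positivity
    calc (0:ENNReal) < 1 := by norm_num
      _ = μ (Function.support _) := by
          rw [← measure_univ (μ := μ)]
          exact (measure_congr (Filter.eventuallyEq_univ.2 hsup)).symm
      _ ≤ _ := le_refl _
  have key : ∀ l₁ ∈ U, ∀ l₂ ∈ U, l₁ ≠ l₂ →
      h l₁ ≠ h l₂ ∧ ‖h l₁ - h l₂‖ < 2 * ‖l₁ - l₂‖ := by
    intro l₁ hl₁ l₂ hl₂ hne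
    obtain ⟨ε₁, hε₁, hae₁⟩ := hfacts l₁ hl₁
    obtain ⟨ε₂, hε₂, hae₂⟩ := hfacts l₂ hl₂
    set a := Complex.I + G l₁ with ha_def
    set b := Complex.I + G l₂ with hb_def
    set s₁ := ∫ u : ℝ, 1 / ‖l₁ - (u : ℂ)‖ ^ 2 ∂μ with hs₁_def
    set s₂ := ∫ u : ℝ, 1 / ‖l₂ - (u : ℂ)‖ ^ 2 ∂μ with hs₂_def
    set K := ∫ u : ℝ, 1 / ((l₁ - (u : ℂ)) * (l₂ - (u : ℂ))) ∂μ with hK_def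
    have hs₁pos : 0 < s₁ := sq_pos l₁ ε₁ hε₁ hae₁
    have hs₂pos : 0 < s₂ := sq_pos l₂ ε₂ hε₂ hae₂
    have hpa : p * s₁ ≤ ‖a‖ ^ 2 := by
      have hb1 := hbound l₁ hl₁
      rw [le_div_iff₀ hp] at hb1
      linarith [hb1]
    have hpb : p * s₂ ≤ ‖b‖ ^ 2 := by
      have hb1 := hbound l₂ hl₂
      rw [le_div_iff₀ hp] at hb1
      linarith [hb1]
    have hna : 0 < ‖a‖ := by nlinarith [norm_nonneg a, mul_pos hp hs₁pos]
    have hnb : 0 < ‖b‖ := by nlinarith [norm_nonneg b, mul_pos hp hs₂pos]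
    have ha0 : a ≠ 0 := norm_pos_iff.mp hna
    have hb0 : b ≠ 0 := norm_pos_iff.mp hnb
    have hi₁ : Integrable (fun u : ℝ => 1 / (l₁ - (u : ℂ))) μ := int_inv l₁ ε₁ hε₁ hae₁
    have hi₂ : Integrable (fun u : ℝ => 1 / (l₂ - (u : ℂ))) μ := int_inv l₂ ε₂ hε₂ hae₂
    have hiK : Integrable (fun u : ℝ => 1 / ((l₁ - (u : ℂ)) * (l₂ - (u : ℂ)))) μ := by
      refine Integrable.mono' (integrable_const (1/(ε₁*ε₂))) (meas_prod' l₁ l₂).aestronglyMeasurable ?_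
      filter_upwards [hae₁, hae₂] with u h1 h2
      rw [norm_div, norm_one, norm_mul]
      apply one_div_le_one_div_of_le (by positivity)
      exact mul_le_mul h1 h2 hε₂.le (norm_nonneg _)
    have hGdiff : G l₁ - G l₂ = (l₂ - l₁) * K := by
      rw [hG l₁, hG l₂, hK_def, ← integral_sub hi₁ hi₂, ← integral_const_mul]
      apply integral_congr_ae
      filter_upwards [hae₁, hae₂] with u h1 h2
      have d1 : l₁ - (u:ℂ) ≠ 0 := by intro hx; rw [hx] at h1; simp at h1; linarith
      have d2 : l₂ - (u:ℂ) ≠ 0 := by intro hx; rw [hx] at h2; simp at h2; linarith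
      field_simp
      ring
    -- the key strict inequality
    have hstrict : p * ‖K‖ < ‖a‖ * ‖b‖ := by
      by_cases hc : l₂ = (starRingEnd ℂ) l₁
      · -- conjugate case
        have him : l₁.im ≠ 0 := by
          intro h0
          have e : (starRingEnd ℂ) l₁ = l₁ := Complex.conj_eq_iff_im.2 h0
          exact hne (hc.trans e).symm
        have hnorm_eq : ∀ u : ℝ, ‖l₂ - (u:ℂ)‖ = ‖l₁ - (u:ℂ)‖ := by
          intro u
          have e : l₂ - (u:ℂ) = (starRingEnd ℂ) (l₁ - (u:ℂ)) := by
            rw [hc, map_sub, Complex.conj_ofReal]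
          rw [e, RCLike.norm_conj]
        have hs21 : s₂ = s₁ := by
          rw [hs₂_def, hs₁_def]
          apply integral_congr_ae
          filter_upwards with u
          rw [hnorm_eq u]
        have hK_le : ‖K‖ ≤ s₁ := by
          refine le_trans (norm_integral_le_integral_norm _) (le_of_eq ?_)
          apply integral_congr_ae
          filter_upwards with u
          rw [norm_div, norm_one, norm_mul, hnorm_eq u, ← sq]
        have him1 : (G l₁).im = (-l₁.im) * s₁ := by
          have e1 := integral_im hi₁
          rw [hG l₁]
          rw [RCLike.im_to_complex] at e1
          rw [← e1]
          rw [hs₁_def, ← integral_const_mul]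
          apply integral_congr_ae
          filter_upwards with u
          rw [RCLike.im_to_complex, one_div, Complex.inv_im]
          rw [Complex.sub_im, Complex.ofReal_im, sub_zero, Complex.normSq_eq_norm_sq]
          rw [div_eq_mul_one_div]
        have hG2 : G l₂ = (starRingEnd ℂ) (G l₁) := by
          rw [hG l₂, hG l₁, ← integral_conj]
          apply integral_congr_ae
          filter_upwards with u
          rw [map_div₀, map_one, map_sub, Complex.conj_ofReal, ← hc]
        have hne_ab : ‖a‖ ≠ ‖b‖ := by
          have h4 : ‖a‖ ^ 2 - ‖b‖ ^ 2 = 4 * (G l₁).im := by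
            rw [ha_def, hb_def, hG2]
            simp only [Complex.sq_norm, Complex.normSq_apply,
              Complex.add_re, Complex.add_im, Complex.I_re, Complex.I_im,
              Complex.conj_re, Complex.conj_im]
            ring
          have h5 : (G l₁).im ≠ 0 := by
            rw [him1]
            exact mul_ne_zero (neg_ne_zero.2 him) (ne_of_gt hs₁pos)
          intro heq
          rw [heq, sub_self] at h4
          exact h5 (by linarith)
        rw [hs21] at hpb
        rcases lt_or_gt_of_ne hne_ab with hab | hab
        · nlinarith
        · nlinarith
      · -- Cauchy-Schwarz case
        set f₁ : ℝ → ℂ := fun u => (starRingEnd ℂ) (1 / (l₁ - (u:ℂ))) with hf₁_def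
        set f₂ : ℝ → ℂ := fun u => 1 / (l₂ - (u:ℂ)) with hf₂_def
        have mem₁ : MemLp f₁ 2 μ := by
          refine MemLp.of_bound ((meas_conj' l₁).aestronglyMeasurable) (1/ε₁) ?_
          filter_upwards [hae₁] with u hu
          rw [hf₁_def]
          simp only [RCLike.norm_conj]
          rw [norm_div, norm_one]
          exact one_div_le_one_div_of_le hε₁ hu
        have mem₂ : MemLp f₂ 2 μ := mem2 l₂ ε₂ hε₂ hae₂
        set F := mem₁.toLp f₁ with hF_def
        set Gp := mem₂.toLp f₂ with hGp_def
        clear_value F Gp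
        have hFnorm : ‖F‖ ^ 2 = s₁ := by
          rw [hF_def, lp_norm_sq μ f₁ mem₁, hs₁_def]
          apply integral_congr_ae
          filter_upwards with u
          rw [hf₁_def]
          simp only [RCLike.norm_conj]
          rw [norm_div, norm_one, div_pow, one_pow]
        have hGnorm : ‖Gp‖ ^ 2 = s₂ := by
          rw [hGp_def, lp_norm_sq μ f₂ mem₂, hs₂_def]
          apply integral_congr_ae
          filter_upwards with u
          rw [hf₂_def, norm_div, norm_one, div_pow, one_pow]
        have hinner : (inner ℂ F Gp : ℂ) = K := by
          rw [hF_def, hGp_def, lp_inner_eq μ f₁ f₂ mem₁ mem₂, hK_def]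
          apply integral_congr_ae
          filter_upwards with u
          rw [hf₁_def, hf₂_def, Complex.conj_conj, div_mul_div_comm, one_mul]
        have hF0 : F ≠ 0 := by
          rw [hF_def]
          apply toLp_ne_zero
          filter_upwards [hae₁] with u hu
          have d1 : l₁ - (u:ℂ) ≠ 0 := by intro hx; rw [hx] at hu; simp at hu; linarith
          rw [hf₁_def]
          simp only [map_ne_zero, one_div, ne_eq, inv_eq_zero]
          exact d1
        have hG0 : Gp ≠ 0 := by
          rw [hGp_def]
          apply toLp_ne_zero
          filter_upwards [hae₂] with u hu
          have d2 : l₂ - (u:ℂ) ≠ 0 := by intro hx; rw [hx] at hu; simp at hu; linarith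
          rw [hf₂_def]
          simp only [one_div, ne_eq, inv_eq_zero]
          exact d2
        have hlt : ‖(inner ℂ F Gp : ℂ)‖ < ‖F‖ * ‖Gp‖ := by
          refine lt_of_le_of_ne (norm_inner_le_norm F Gp) (fun heq => ?_)
          obtain ⟨r, hr0, hGr⟩ := (norm_inner_eq_norm_iff hF0 hG0).1 heq
          have hGe : ∀ᵐ u : ℝ ∂μ, f₂ u = r * f₁ u := by
            have e1 : ⇑Gp =ᵐ[μ] f₂ := hGp_def ▸ mem₂.coeFn_toLp
            have e2 : ⇑(r • F) =ᵐ[μ] fun u => r * f₁ u := by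
              filter_upwards [Lp.coeFn_smul r F, hF_def ▸ mem₁.coeFn_toLp] with u k1 k2
              rw [k1]
              simp only [Pi.smul_apply, smul_eq_mul, k2]
            filter_upwards [e1.symm, hGr ▸ e2] with u k1 k2
            rw [k1, k2]
          have key_ae : ∀ᵐ u : ℝ ∂μ, (u:ℂ) * (r - 1) = r * l₂ - (starRingEnd ℂ) l₁ := by
            filter_upwards [hGe, hae₁, hae₂] with u e1 e2 e3
            have d1 : (starRingEnd ℂ) l₁ - (u:ℂ) ≠ 0 := by
              intro hx
              have : l₁ - (u:ℂ) = 0 := by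
                have := congrArg (starRingEnd ℂ) hx
                simpa [Complex.conj_ofReal] using this
              rw [this] at e2; simp at e2; linarith
            have d2 : l₂ - (u:ℂ) ≠ 0 := by intro hx; rw [hx] at e3; simp at e3; linarith
            rw [hf₁_def, hf₂_def] at e1
            simp only [map_div₀, map_one, map_sub, Complex.conj_ofReal] at e1
            field_simp at e1
            linear_combination e1
          by_cases hr1 : r = 1
          · obtain ⟨u, hu⟩ := key_ae.exists
            rw [hr1] at hu
            apply hc
            linear_combination -hu
          · set w := (r * l₂ - (starRingEnd ℂ) l₁) / (r - 1) with hw_def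
            have hr1' : r - 1 ≠ 0 := sub_ne_zero.2 hr1
            have key2 : ∀ᵐ u : ℝ ∂μ, u = w.re := by
              filter_upwards [key_ae] with u hu
              have : (u:ℂ) = w := by
                rw [hw_def, eq_div_iff hr1']
                exact hu
              have := congrArg Complex.re this
              simpa using this
            have hcompl : μ {w.re}ᶜ = 0 := by
              rw [ae_iff] at key2
              exact key2
            exact hnd ⟨w.re, eq_dirac_of_compl μ w.re hcompl⟩
        rw [← hinner]
        have hFG : p * (‖F‖ * ‖Gp‖) ≤ ‖a‖ * ‖b‖ := by
          have m1 : p * ‖F‖ ^ 2 ≤ ‖a‖ ^ 2 := by rw [hFnorm]; exact hpa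
          have m2 : p * ‖Gp‖ ^ 2 ≤ ‖b‖ ^ 2 := by rw [hGnorm]; exact hpb
          have hsq : (p * (‖F‖ * ‖Gp‖)) ^ 2 ≤ (‖a‖ * ‖b‖) ^ 2 := by
            nlinarith [mul_le_mul m1 m2 (by positivity) (by positivity), norm_nonneg F,
              norm_nonneg Gp]
          have hrt := Real.sqrt_le_sqrt hsq
          rwa [Real.sqrt_sq (by positivity), Real.sqrt_sq (by positivity)] at hrt
        calc p * ‖(inner ℂ F Gp : ℂ)‖ < p * (‖F‖ * ‖Gp‖) := by
              exact mul_lt_mul_of_pos_left hlt hp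
          _ ≤ ‖a‖ * ‖b‖ := hFG
    -- algebraic identity and conclusion
    obtain ⟨q, hq_def⟩ : ∃ q : ℂ, q = (p:ℂ) * K / (a * b) := ⟨_, rfl⟩
    have hqnorm : ‖q‖ < 1 := by
      rw [hq_def, norm_div, norm_mul, norm_mul]
      rw [div_lt_one (mul_pos hna hnb)]
      have hpn : ‖(p:ℂ)‖ = p := by
        rw [Complex.norm_real, Real.norm_of_nonneg hp.le]
      rw [hpn]
      exact hstrict
    have hdiff : h l₁ - h l₂ = (l₁ - l₂) * (1 - q) := by
      rw [hh l₁ hl₁, hh l₂ hl₂, ← ha_def, ← hb_def, hq_def]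
      refine hdiff_algebra p l₁ l₂ a b K ha0 hb0 ?_
      have e : a - b = G l₁ - G l₂ := by rw [ha_def, hb_def]; ring
      rw [e, hGdiff]
    have h1q : (1:ℂ) - q ≠ 0 := by
      intro h0
      have : q = 1 := by linear_combination -h0
      rw [this] at hqnorm
      simp at hqnorm
    constructor
    · intro heq
      have : h l₁ - h l₂ = 0 := by rw [heq]; ring
      rw [hdiff] at this
      exact (mul_ne_zero (sub_ne_zero.2 hne) h1q) this
    · rw [hdiff, norm_mul]
      have hb2 : ‖(1:ℂ) - q‖ < 2 := by
        calc ‖(1:ℂ) - q‖ ≤ ‖(1:ℂ)‖ + ‖q‖ := norm_sub_le 1 q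
          _ = 1 + ‖q‖ := by rw [norm_one]
          _ < 2 := by linarith
      have hl12 : 0 < ‖l₁ - l₂‖ := by
        rw [norm_pos_iff]
        exact sub_ne_zero.2 hne
      calc ‖l₁ - l₂‖ * ‖(1:ℂ) - q‖ < ‖l₁ - l₂‖ * 2 := by
            exact mul_lt_mul_of_pos_left hb2 hl12
        _ = 2 * ‖l₁ - l₂‖ := by ring
  constructor
  · intro x hx y hy hxy
    by_contra hxy'
    exact (key x hx y hy hxy').1 hxy
  · intro l₁ h1 l₂ h2 hne
    exact (key l₁ h1 l₂ h2 hne).2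
end

section
/- Let μ be a probability measure on ℝ with an atom at α of mass m ∈ (0,1), and p > m. With T(δ), S(δ) as above and D(δ) = δ²T(δ)² + S(δ)² + 1, one has lim_{δ→0+} p·T(δ)/D(δ) = p/m > 1. -/
open MeasureTheory Filter

lemma tendA (μ : Measure ℝ) [IsProbabilityMeasure μ] (α : ℝ) :
    Tendsto (fun δ : ℝ => ∫ t, δ ^ 2 / ((α - t) ^ 2 + δ ^ 2) ∂μ)
      (nhdsWithin 0 (Set.Ioi 0)) (nhds ((μ {α}).toReal)) := by
  rw [← measureReal_def, ← MeasureTheory.integral_indicator_one (measurableSet_singleton α)]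
  apply tendsto_integral_filter_of_dominated_convergence (fun _ => (1:ℝ))
  · filter_upwards [self_mem_nhdsWithin] with δ hδ
    have hδ0 : (0:ℝ) < δ := hδ
    refine Continuous.aestronglyMeasurable (Continuous.div continuous_const (by fun_prop)
      fun x => ne_of_gt (by positivity))
  · filter_upwards [self_mem_nhdsWithin] with δ hδ
    filter_upwards with t
    have hδ0 : (0:ℝ) < δ := hδ
    have hd : (0:ℝ) < (α - t) ^ 2 + δ ^ 2 := by positivity
    rw [Real.norm_eq_abs, abs_of_nonneg (by positivity)]
    exact div_le_one_of_le₀ (by nlinarith) hd.le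
  · exact integrable_const 1
  · filter_upwards with t
    by_cases ht : t = α
    · subst ht
      have : Set.indicator {t} (1 : ℝ → ℝ) t = 1 := by simp
      rw [this]
      apply Tendsto.congr' _ tendsto_const_nhds
      filter_upwards [self_mem_nhdsWithin] with δ hδ
      have : (0:ℝ) < δ := hδ
      field_simp
      ring
    · have h1 : Set.indicator {α} (1 : ℝ → ℝ) t = 0 := by
        simp [Set.indicator_of_notMem, ht]
      rw [h1]
      have hα : (α - t) ^ 2 > 0 := by
        have : α - t ≠ 0 := sub_ne_zero.mpr (fun h => ht h.symm)
        positivity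
      have : Tendsto (fun δ : ℝ => δ ^ 2 / ((α - t) ^ 2 + δ ^ 2)) (nhds 0)
          (nhds ((0:ℝ) ^ 2 / ((α - t) ^ 2 + (0:ℝ) ^ 2))) := by
        apply Tendsto.div
        · exact (continuous_pow 2).tendsto 0
        · exact ((continuous_pow 2).tendsto 0).const_add _
        · positivity
      simpa using this.mono_left nhdsWithin_le_nhds

lemma tendB (μ : Measure ℝ) [IsProbabilityMeasure μ] (α : ℝ) :
    Tendsto (fun δ : ℝ => ∫ t, δ * ((α - t) / ((α - t) ^ 2 + δ ^ 2)) ∂μ)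
      (nhdsWithin 0 (Set.Ioi 0)) (nhds 0) := by
  have key : Tendsto (fun δ : ℝ => ∫ t, δ * ((α - t) / ((α - t) ^ 2 + δ ^ 2)) ∂μ)
      (nhdsWithin 0 (Set.Ioi 0)) (nhds (∫ _ : ℝ, (0:ℝ) ∂μ)) := by
    apply tendsto_integral_filter_of_dominated_convergence (fun _ => (1:ℝ)/2)
    · filter_upwards [self_mem_nhdsWithin] with δ hδ
      have hδ0 : (0:ℝ) < δ := hδ
      refine Continuous.aestronglyMeasurable (Continuous.mul continuous_const
        (Continuous.div (by fun_prop) (by fun_prop) fun x => ne_of_gt (by positivity)))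
    · filter_upwards [self_mem_nhdsWithin] with δ hδ
      filter_upwards with t
      have hδ0 : (0:ℝ) < δ := hδ
      have hd : (0:ℝ) < (α - t) ^ 2 + δ ^ 2 := by positivity
      rw [Real.norm_eq_abs, mul_div_assoc', abs_div, abs_of_pos hd, div_le_iff₀ hd]
      have h1 : |δ * (α - t)| = δ * |α - t| := by
        rw [abs_mul, abs_of_pos hδ0]
      rw [h1]
      have h2 : |α - t| ^ 2 = (α - t) ^ 2 := sq_abs _
      nlinarith [sq_nonneg (|α - t| - δ), abs_nonneg (α - t)]
    · exact integrable_const _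
    · filter_upwards with t
      by_cases ht : t = α
      · subst ht
        apply Tendsto.congr' _ tendsto_const_nhds
        filter_upwards with δ
        simp
      · have hα : (α - t) ^ 2 > 0 := by
          have : α - t ≠ 0 := sub_ne_zero.mpr (fun h => ht h.symm)
          positivity
        have : Tendsto (fun δ : ℝ => δ * ((α - t) / ((α - t) ^ 2 + δ ^ 2))) (nhds 0)
            (nhds ((0:ℝ) * ((α - t) / ((α - t) ^ 2 + (0:ℝ) ^ 2)))) := by
          apply Tendsto.mul tendsto_id
          apply Tendsto.div tendsto_const_nhds
          · exact ((continuous_pow 2).tendsto 0).const_add _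
          · positivity
        simpa using this.mono_left nhdsWithin_le_nhds
  simpa using key

theorem atom_limit_pTD (μ : Measure ℝ) [IsProbabilityMeasure μ] (α : ℝ)
    (m : ℝ) (hm : m = (μ {α}).toReal) (hm0 : 0 < m) (hm1 : m < 1)
    (p : ℝ) (hp : m < p)
    (T S D : ℝ → ℝ)
    (hT : ∀ δ, T δ = ∫ t, 1 / ((α - t) ^ 2 + δ ^ 2) ∂μ)
    (hS : ∀ δ, S δ = ∫ t, (α - t) / ((α - t) ^ 2 + δ ^ 2) ∂μ)
    (hD : ∀ δ, D δ = δ ^ 2 * T δ ^ 2 + S δ ^ 2 + 1) :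
    Tendsto (fun δ => p * T δ / D δ) (nhdsWithin 0 (Set.Ioi 0)) (nhds (p / m)) ∧
      1 < p / m := by
  constructor
  · -- A := δ² T δ, B := δ S δ
    have hA : Tendsto (fun δ : ℝ => δ ^ 2 * T δ) (nhdsWithin 0 (Set.Ioi 0)) (nhds m) := by
      rw [hm]
      apply Tendsto.congr _ (tendA μ α)
      intro δ
      rw [hT δ, ← MeasureTheory.integral_const_mul]
      congr 1; ext t; ring
    have hB : Tendsto (fun δ : ℝ => δ * S δ) (nhdsWithin 0 (Set.Ioi 0)) (nhds 0) := by
      apply Tendsto.congr _ (tendB μ α)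
      intro δ
      rw [hS δ, ← MeasureTheory.integral_const_mul]
    have hid : Tendsto (fun δ : ℝ => δ) (nhdsWithin 0 (Set.Ioi 0)) (nhds 0) :=
      (continuous_id.tendsto 0).mono_left nhdsWithin_le_nhds
    have hden : Tendsto (fun δ : ℝ => (δ ^ 2 * T δ) * (δ ^ 2 * T δ) + (δ * S δ) * (δ * S δ)
        + δ * δ) (nhdsWithin 0 (Set.Ioi 0)) (nhds (m * m + 0 * 0 + 0 * 0)) :=
      ((hA.mul hA).add (hB.mul hB)).add (hid.mul hid)
    have hmm : m * m + 0 * 0 + 0 * 0 ≠ 0 := by nlinarith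
    have hg : Tendsto (fun δ : ℝ => p * (δ ^ 2 * T δ) / ((δ ^ 2 * T δ) * (δ ^ 2 * T δ)
        + (δ * S δ) * (δ * S δ) + δ * δ)) (nhdsWithin 0 (Set.Ioi 0))
        (nhds (p * m / (m * m + 0 * 0 + 0 * 0))) :=
      (hA.const_mul p).div hden hmm
    have hval : p * m / (m * m + 0 * 0 + 0 * 0) = p / m := by
      field_simp
      ring
    rw [hval] at hg
    apply Tendsto.congr' _ hg
    filter_upwards [self_mem_nhdsWithin] with δ hδ
    have hδ0 : (0:ℝ) < δ := hδ
    have hDpos : 0 < D δ := by rw [hD δ]; positivity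
    have h1 : δ ^ 2 * T δ * (δ ^ 2 * T δ) + δ * S δ * (δ * S δ) + δ * δ = δ ^ 2 * D δ := by
      rw [hD δ]; ring
    have h2 : p * (δ ^ 2 * T δ) = δ ^ 2 * (p * T δ) := by ring
    rw [h1, h2, mul_div_mul_left _ _ (by positivity : (δ:ℝ) ^ 2 ≠ 0)]
  · exact (one_lt_div hm0).mpr hp
end

section
/- Let μ be a Borel probability measure on ℝ, α, β ∈ ℝ, δ > 0, and define S, T, D as in the paper: S = ∫(α−t)/((α−t)²+β²+δ²)dμ, T = ∫1/((α−t)²+β²+δ²)dμ, D = δ²T² + S² + (1−βT)². Then ∂D/∂β − (β/δ)·∂D/∂δ = −2T. -/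
open MeasureTheory

noncomputable def Sfun (μ : Measure ℝ) (α β δ : ℝ) : ℝ :=
  ∫ t, (α - t) / ((α - t) ^ 2 + β ^ 2 + δ ^ 2) ∂μ

noncomputable def Tfun (μ : Measure ℝ) (α β δ : ℝ) : ℝ :=
  ∫ t, 1 / ((α - t) ^ 2 + β ^ 2 + δ ^ 2) ∂μ

noncomputable def Dfun (μ : Measure ℝ) (α β δ : ℝ) : ℝ :=
  δ ^ 2 * Tfun μ α β δ ^ 2 + Sfun μ α β δ ^ 2 + (1 - β * Tfun μ α β δ) ^ 2

set_option maxHeartbeats 1000000 in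
lemma aux_hasDerivAt (μ : Measure ℝ) [IsProbabilityMeasure μ] (α r x₀ ε k : ℝ)
    (hε : 0 < ε) (hk : 0 < k) (hlow : ∀ x ∈ Metric.ball x₀ ε, k ≤ x ^ 2 + r)
    (c : ℝ → ℝ) (hcm : Measurable c) (hc : ∀ t, c t = 1 ∨ c t = α - t) :
    HasDerivAt (fun x => ∫ t, c t / ((α - t) ^ 2 + x ^ 2 + r) ∂μ)
      (∫ t, c t * (-(2 * x₀)) / (((α - t) ^ 2 + x₀ ^ 2 + r) ^ 2) ∂μ) x₀ := by
  have hx₀ : x₀ ∈ Metric.ball x₀ ε := Metric.mem_ball_self hε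
  have hden : ∀ x ∈ Metric.ball x₀ ε, ∀ t, k ≤ (α - t) ^ 2 + x ^ 2 + r := by
    intro x hx t
    have := hlow x hx
    nlinarith [sq_nonneg (α - t)]
  have hcb : ∀ x ∈ Metric.ball x₀ ε, ∀ t, |c t| ≤ 2 + ((α - t) ^ 2 + x ^ 2 + r) := by
    intro x hx t
    have h1 := hden x hx t
    have h3 := hlow x hx
    rcases hc t with h | h <;> rw [h]
    · rw [abs_one]; nlinarith
    · rcases abs_cases (α - t) with ⟨h2, _⟩ | ⟨h2, _⟩ <;> rw [h2] <;>
        nlinarith [sq_nonneg (α - t - 1), sq_nonneg (α - t + 1), hk, h3]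
  have hxb : ∀ x ∈ Metric.ball x₀ ε, |x| ≤ |x₀| + ε := by
    intro x hx
    rw [Metric.mem_ball, Real.dist_eq] at hx
    cases abs_cases x <;> cases abs_cases (x - x₀) <;> cases abs_cases x₀ <;> linarith
  set M : ℝ := |x₀| + ε with hM
  have hM0 : 0 < M := add_pos_of_nonneg_of_pos (abs_nonneg _) hε
  have hF_meas : ∀ᶠ x in nhds x₀, AEStronglyMeasurable (fun t => c t / ((α - t) ^ 2 + x ^ 2 + r)) μ := by
    filter_upwards with x
    exact (hcm.div (by fun_prop)).aestronglyMeasurable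
  have hF_int : Integrable (fun t => c t / ((α - t) ^ 2 + x₀ ^ 2 + r)) μ := by
    apply Integrable.mono' (g := fun _ => 2 / k + 1) (integrable_const _)
      (hcm.div (by fun_prop)).aestronglyMeasurable
    filter_upwards with t
    have hd := hden x₀ hx₀ t
    have hcb' := hcb x₀ hx₀ t
    have hd0 : (0:ℝ) < (α - t) ^ 2 + x₀ ^ 2 + r := lt_of_lt_of_le hk hd
    rw [Real.norm_eq_abs, Pi.div_apply, abs_div, abs_of_pos hd0, div_le_iff₀ hd0]
    have h2 : 2 / k * ((α - t) ^ 2 + x₀ ^ 2 + r) ≥ 2 := by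
      rw [ge_iff_le, div_mul_eq_mul_div, le_div_iff₀ hk]; nlinarith
    nlinarith
  have hF'_meas : AEStronglyMeasurable (fun t => c t * (-(2 * x₀)) / (((α - t) ^ 2 + x₀ ^ 2 + r) ^ 2)) μ :=
    ((hcm.mul measurable_const).div (by fun_prop)).aestronglyMeasurable
  have h_bound : ∀ᵐ t ∂μ, ∀ x ∈ Metric.ball x₀ ε,
      ‖c t * (-(2 * x)) / (((α - t) ^ 2 + x ^ 2 + r) ^ 2)‖ ≤ 2 * M * (2 / k ^ 2 + 1 / k) := by
    filter_upwards with t x hx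
    have hd := hden x hx t
    have hcb' := hcb x hx t
    have hxb' := hxb x hx
    have hd0 : (0:ℝ) < (α - t) ^ 2 + x ^ 2 + r := lt_of_lt_of_le hk hd
    rw [Real.norm_eq_abs, abs_div, abs_mul, abs_neg, abs_mul, abs_two,
      abs_of_pos (pow_pos hd0 2), div_le_iff₀ (pow_pos hd0 2)]
    have hx0 : 0 ≤ |x| := abs_nonneg x
    have hc0 : 0 ≤ |c t| := abs_nonneg _
    have h1 : |c t| * (2 * |x|) ≤ (2 + ((α - t) ^ 2 + x ^ 2 + r)) * (2 * M) := by
      apply mul_le_mul hcb' (by linarith) (by linarith) (by nlinarith)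
    refine h1.trans ?_
    have e2 : 2 / k ^ 2 * ((α - t) ^ 2 + x ^ 2 + r) ^ 2 ≥ 2 := by
      rw [ge_iff_le, div_mul_eq_mul_div, le_div_iff₀ (by positivity)]; nlinarith
    have e3 : 1 / k * ((α - t) ^ 2 + x ^ 2 + r) ^ 2 ≥ ((α - t) ^ 2 + x ^ 2 + r) := by
      rw [ge_iff_le, div_mul_eq_mul_div, le_div_iff₀ hk]; nlinarith
    nlinarith
  have h_diff : ∀ᵐ t ∂μ, ∀ x ∈ Metric.ball x₀ ε, HasDerivAt (fun y => c t / ((α - t) ^ 2 + y ^ 2 + r))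
      (c t * (-(2 * x)) / (((α - t) ^ 2 + x ^ 2 + r) ^ 2)) x := by
    filter_upwards with t x hx
    have hd0 : ((α - t) ^ 2 + x ^ 2 + r) ≠ 0 :=
      ne_of_gt (lt_of_lt_of_le hk (hden x hx t))
    have hsq : HasDerivAt (fun y : ℝ => y ^ 2) (2 * x) x := by
      simpa using hasDerivAt_pow 2 x
    have h1 : HasDerivAt (fun y : ℝ => (α - t) ^ 2 + y ^ 2 + r) (2 * x) x :=
      (hsq.const_add ((α - t) ^ 2)).add_const r
    have h2 := (hasDerivAt_const x (c t)).div h1 hd0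
    have he : c t * (-(2 * x)) / (((α - t) ^ 2 + x ^ 2 + r) ^ 2)
        = (0 * ((α - t) ^ 2 + x ^ 2 + r) - c t * (2 * x))
        / ((α - t) ^ 2 + x ^ 2 + r) ^ 2 := by ring
    rw [he]
    exact h2
  exact (hasDerivAt_integral_of_dominated_loc_of_deriv_le (𝕜 := ℝ) (μ := μ) (x₀ := x₀)
    (bound := fun _ => 2 * M * (2 / k ^ 2 + 1 / k)) (s := Metric.ball x₀ ε)
    (F := fun x t => c t / ((α - t) ^ 2 + x ^ 2 + r))
    (F' := fun x t => c t * (-(2 * x)) / (((α - t) ^ 2 + x ^ 2 + r) ^ 2))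
    (Metric.ball_mem_nhds x₀ hε) hF_meas hF_int hF'_meas h_bound (integrable_const _) h_diff).2

theorem D_derivative_identity (μ : Measure ℝ) [IsProbabilityMeasure μ]
    (α β δ : ℝ) (hδ : 0 < δ) :
    deriv (fun b => Dfun μ α b δ) β - (β / δ) * deriv (fun d => Dfun μ α β d) δ =
      -2 * Tfun μ α β δ := by
  set T := Tfun μ α β δ with hT
  set S := Sfun μ α β δ with hS
  set U : ℝ := ∫ t, 1 / (((α - t) ^ 2 + β ^ 2 + δ ^ 2) ^ 2) ∂μ with hU
  set V : ℝ := ∫ t, (α - t) / (((α - t) ^ 2 + β ^ 2 + δ ^ 2) ^ 2) ∂μ with hV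
  -- derivatives in β
  have hTβ : HasDerivAt (fun b => Tfun μ α b δ) (-(2 * β) * U) β := by
    have := aux_hasDerivAt μ α (δ ^ 2) β 1 (δ ^ 2) one_pos (by positivity)
      (fun x _ => by nlinarith [sq_nonneg x]) (fun _ => 1) measurable_const (fun t => Or.inl rfl)
    convert this using 1
    · rfl
    rw [hU, ← integral_const_mul]
    congr 1; funext t; ring
  have hSβ : HasDerivAt (fun b => Sfun μ α b δ) (-(2 * β) * V) β := by
    have := aux_hasDerivAt μ α (δ ^ 2) β 1 (δ ^ 2) one_pos (by positivity)
      (fun x _ => by nlinarith [sq_nonneg x]) (fun t => α - t) (by fun_prop)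
      (fun t => Or.inr rfl)
    convert this using 1
    · rfl
    rw [hV, ← integral_const_mul]
    congr 1; funext t; ring
  -- derivatives in δ
  have hlowδ : ∀ x ∈ Metric.ball δ (δ / 2), δ ^ 2 / 4 ≤ x ^ 2 + β ^ 2 := by
    intro x hx
    rw [Metric.mem_ball, Real.dist_eq] at hx
    cases abs_cases (x - δ) <;> nlinarith [sq_nonneg β]
  have hTδ : HasDerivAt (fun d => Tfun μ α β d) (-(2 * δ) * U) δ := by
    have := aux_hasDerivAt μ α (β ^ 2) δ (δ / 2) (δ ^ 2 / 4) (by linarith) (by positivity)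
      hlowδ (fun _ => 1) measurable_const (fun t => Or.inl rfl)
    have e1 : (fun d => Tfun μ α β d) = (fun x => ∫ t, 1 / ((α - t) ^ 2 + x ^ 2 + β ^ 2) ∂μ) := by
      funext d
      rw [Tfun]
      congr 1; funext t; ring_nf
    rw [e1]
    convert this using 1
    rw [hU, ← integral_const_mul]
    congr 1; funext t; ring_nf
  have hSδ : HasDerivAt (fun d => Sfun μ α β d) (-(2 * δ) * V) δ := by
    have := aux_hasDerivAt μ α (β ^ 2) δ (δ / 2) (δ ^ 2 / 4) (by linarith) (by positivity)
      hlowδ (fun t => α - t) (by fun_prop) (fun t => Or.inr rfl)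
    have e1 : (fun d => Sfun μ α β d)
        = (fun x => ∫ t, (α - t) / ((α - t) ^ 2 + x ^ 2 + β ^ 2) ∂μ) := by
      funext d
      rw [Sfun]
      congr 1; funext t; ring_nf
    rw [e1]
    convert this using 1
    rw [hV, ← integral_const_mul]
    congr 1; funext t; ring_nf
  -- derivative of D in β
  have hDβ : HasDerivAt (fun b => Dfun μ α b δ)
      (δ ^ 2 * (2 * T * (-(2 * β) * U)) + 2 * S * (-(2 * β) * V)
        + 2 * (1 - β * T) * (-(T + β * (-(2 * β) * U)))) β := by
    have h1 : HasDerivAt (fun b => δ ^ 2 * Tfun μ α b δ ^ 2)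
        (δ ^ 2 * (2 * T * (-(2 * β) * U))) β := by
      have := (hTβ.fun_pow 2).const_mul (δ ^ 2)
      refine this.congr_deriv ?_; rw [hT]; ring
    have h2 : HasDerivAt (fun b => Sfun μ α b δ ^ 2) (2 * S * (-(2 * β) * V)) β := by
      have := hSβ.fun_pow 2
      refine this.congr_deriv ?_; rw [hS]; ring
    have h3 : HasDerivAt (fun b => (1 - b * Tfun μ α b δ) ^ 2)
        (2 * (1 - β * T) * (-(T + β * (-(2 * β) * U)))) β := by
      have hmul : HasDerivAt (fun b => b * Tfun μ α b δ)
          (1 * T + β * (-(2 * β) * U)) β := (hasDerivAt_id β).mul hTβ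
      have := ((hmul.const_sub 1).fun_pow 2)
      refine this.congr_deriv ?_; rw [hT]; ring
    have := (h1.add h2).add h3
    exact this
  -- derivative of D in δ
  have hDδ : HasDerivAt (fun d => Dfun μ α β d)
      (2 * δ * T ^ 2 + δ ^ 2 * (2 * T * (-(2 * δ) * U)) + 2 * S * (-(2 * δ) * V)
        + 2 * (1 - β * T) * (-(β * (-(2 * δ) * U)))) δ := by
    have h1 : HasDerivAt (fun d => d ^ 2 * Tfun μ α β d ^ 2)
        (2 * δ * T ^ 2 + δ ^ 2 * (2 * T * (-(2 * δ) * U))) δ := by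
      have := (hasDerivAt_pow 2 δ).mul (hTδ.fun_pow 2)
      refine this.congr_deriv ?_; rw [hT]; ring
    have h2 : HasDerivAt (fun d => Sfun μ α β d ^ 2) (2 * S * (-(2 * δ) * V)) δ := by
      have := hSδ.fun_pow 2
      refine this.congr_deriv ?_; rw [hS]; ring
    have h3 : HasDerivAt (fun d => (1 - β * Tfun μ α β d) ^ 2)
        (2 * (1 - β * T) * (-(β * (-(2 * δ) * U)))) δ := by
      have := ((hTδ.const_mul β).const_sub 1).fun_pow 2
      refine this.congr_deriv ?_; rw [hT]; ring
    have := (h1.add h2).add h3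
    exact this
  rw [hDβ.deriv, hDδ.deriv]
  have hδ' : δ ≠ 0 := ne_of_gt hδ
  field_simp
  ring
end
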